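/- Let G be a K_{3,3}-free triangle-free graph, v a vertex, R ⊆ V(G), and suppose N_R(v) := N(v) ∩ R is dominated by a set A_v of at most 3 vertices not containing v. Then every vertex z ∉ {v} ∪ A_v satisfies |N_R(v) ∩ N_R(z)| ≤ 6. -/

import Mathlib

/-- In a `K_{3,3}`-free triangle-free graph, if the residual neighborhood
`N_R(v) = N(v) ∩ R` of a vertex `v` is dominated by a set `A` of at most 3
vertices not containing `v`, then every vertex `z ∉ {v} ∪ A` shares at most 6
residual neighbors with `v`. -/
theorem stmt16 {V : Type*} [Fintype V] [DecidableEq V]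
    (G : SimpleGraph V) [DecidableRel G.Adj]
    (h33 : ¬ ∃ (A B : Finset V), A.card = 3 ∧ B.card = 3 ∧ Disjoint A B ∧
      ∀ a ∈ A, ∀ b ∈ B, G.Adj a b)
    (htf : G.CliqueFree 3)
    (R : Finset V) (v : V) (A : Finset V) (hA : A.card ≤ 3) (hvA : v ∉ A)
    (hdom : ∀ w ∈ G.neighborFinset v ∩ R, ∃ a ∈ A, a = w ∨ G.Adj a w)
    (z : V) (hzv : z ≠ v) (hzA : z ∉ A) :
    ((G.neighborFinset v ∩ R) ∩ (G.neighborFinset z ∩ R)).card ≤ 6 := by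
  set S := (G.neighborFinset v ∩ R) ∩ (G.neighborFinset z ∩ R) with hSdef
  have hSadj : ∀ w ∈ S, G.Adj v w ∧ G.Adj z w := by
    intro w hw
    simp only [hSdef, Finset.mem_inter, SimpleGraph.mem_neighborFinset] at hw
    exact ⟨hw.1.1, hw.2.1⟩
  -- each element of S is covered by insert a (N a) for some a ∈ A
  have hsub : S ⊆ A.biUnion (fun a => (insert a (G.neighborFinset a)) ∩ S) := by
    intro w hw
    have hw' : w ∈ G.neighborFinset v ∩ R := by
      simp only [hSdef, Finset.mem_inter] at hw ⊢; exact hw.1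
    obtain ⟨a, ha, hcase⟩ := hdom w hw'
    rw [Finset.mem_biUnion]
    refine ⟨a, ha, Finset.mem_inter.mpr ⟨?_, hw⟩⟩
    rcases hcase with h | h
    · exact Finset.mem_insert.mpr (Or.inl h.symm)
    · exact Finset.mem_insert.mpr (Or.inr ((SimpleGraph.mem_neighborFinset G a w).mpr h))
  have hbound : ∀ a ∈ A, ((insert a (G.neighborFinset a)) ∩ S).card ≤ 2 := by
    intro a ha
    by_cases haS : a ∈ S
    · -- then N(a) ∩ S = ∅ by triangle-freeness
      have hsub1 : (insert a (G.neighborFinset a)) ∩ S ⊆ {a} := by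
        intro w hw
        rw [Finset.mem_inter, Finset.mem_insert] at hw
        rcases hw.1 with rfl | hwn
        · exact Finset.mem_singleton_self w
        · exfalso
          rw [SimpleGraph.mem_neighborFinset] at hwn
          have h1 := (hSadj a haS).1
          have h2 := (hSadj w hw.2).1
          exact htf {v, a, w}
            (SimpleGraph.is3Clique_triple_iff.mpr ⟨h1, h2, hwn⟩)
      calc _ ≤ ({a} : Finset V).card := Finset.card_le_card hsub1
        _ ≤ 2 := by simp
    · -- else N(a) ∩ S has ≤ 2 elements, else K_{3,3}
      by_contra hcard
      push_neg at hcard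
      obtain ⟨B, hBsub, hB3⟩ := Finset.exists_subset_card_eq (s := (insert a (G.neighborFinset a)) ∩ S) (n := 3) hcard
      have hBprop : ∀ b ∈ B, G.Adj v b ∧ G.Adj z b ∧ G.Adj a b := by
        intro b hb
        have hb' := hBsub hb
        rw [Finset.mem_inter, Finset.mem_insert] at hb'
        have hbS := hb'.2
        rcases hb'.1 with rfl | hbn
        · exact absurd hbS haS
        · rw [SimpleGraph.mem_neighborFinset] at hbn
          exact ⟨(hSadj b hbS).1, (hSadj b hbS).2, hbn⟩
      apply h33
      refine ⟨{v, z, a}, B, ?_, hB3, ?_, ?_⟩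
      · have hav : a ≠ v := fun h => hvA (h ▸ ha)
        have haz : a ≠ z := fun h => hzA (h ▸ ha)
        rw [Finset.card_insert_of_notMem (by simp [hzv.symm, hav.symm]),
            Finset.card_insert_of_notMem (by simp [haz.symm])]
        simp
      · rw [Finset.disjoint_left]
        intro x hx hxB
        obtain ⟨h1, h2, h3⟩ := hBprop x hxB
        simp only [Finset.mem_insert, Finset.mem_singleton] at hx
        rcases hx with rfl | rfl | rfl
        · exact G.irrefl h1
        · exact G.irrefl h2
        · exact G.irrefl h3
      · intro x hx b hb
        obtain ⟨h1, h2, h3⟩ := hBprop b hb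
        simp only [Finset.mem_insert, Finset.mem_singleton] at hx
        rcases hx with rfl | rfl | rfl
        · exact h1
        · exact h2
        · exact h3
  calc S.card ≤ (A.biUnion (fun a => (insert a (G.neighborFinset a)) ∩ S)).card :=
        Finset.card_le_card hsub
    _ ≤ ∑ a ∈ A, ((insert a (G.neighborFinset a)) ∩ S).card :=
        Finset.card_biUnion_le
    _ ≤ ∑ _a ∈ A, 2 := Finset.sum_le_sum hbound
    _ = 2 * A.card := by rw [Finset.sum_const, smul_eq_mul, mul_comm]
    _ ≤ 6 := by omega
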